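/- Strictly positive Hardy probability is incompatible with any convex mixture of one-versus-two bipartitioned no-signalling models: Suppose p(a,b,c|x,y,z) = Σ_m [μ₁(m) p_A^m(a|x) q_{BC}^m(b,c|y,z) + μ₂(m) p_B^m(b|y) q_{AC}^m(a,c|x,z) + μ₃(m) p_C^m(c|z) q_{AB}^m(a,b|x,y)] where all component distributions are no-signalling bipartite distributions and single-party distributions, weights are nonnegative and sum to 1. If p satisfies the four Hardy zero constraints p_{AB}(+1,+1|1,0)=0, p_{BC}(+1,+1|1,0)=0, p_{AC}(+1,+1|0,1)=0, p(-1,-1,-1|1,1,1)=0, then p(+1,+1,+1|0,0,0)=0. -/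
import Mathlib


open Finset


open Finset

private lemma sum3_zero {x y z : ℝ} (hx : 0 ≤ x) (hy : 0 ≤ y) (hz : 0 ≤ z)
    (h : x + y + z = 0) : x = 0 ∧ y = 0 ∧ z = 0 :=
  ⟨by linarith, by linarith, by linarith⟩

private lemma hardyCaseA (pa : Bool → Fin 2 → ℝ) (q : Bool → Bool → Fin 2 → Fin 2 → ℝ)
    (hpa : ∀ a x, 0 ≤ pa a x) (hpan : ∀ x, ∑ a, pa a x = 1)
    (hq : ∀ b c y z, 0 ≤ q b c y z)
    (hqn : ∀ y z, ∑ b, ∑ c, q b c y z = 1)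
    (ns1 : ∀ b y z z', ∑ c, q b c y z = ∑ c, q b c y z')
    (ns2 : ∀ c y y' z, ∑ b, q b c y z = ∑ b, q b c y' z)
    (c1 : ∀ z, pa true 1 * ∑ c, q true c 0 z = 0)
    (c2 : q true true 1 0 = 0)
    (c3 : ∀ y, pa true 0 * ∑ b, q b true y 1 = 0)
    (c4 : pa false 1 * q false false 1 1 = 0) :
    pa true 0 * q true true 0 0 = 0 := by
  by_contra h
  obtain ⟨hA, hQ⟩ := mul_ne_zero_iff.mp h
  have hA0 : 0 < pa true 0 := lt_of_le_of_ne (hpa true 0) (Ne.symm hA)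
  have hQ0 : 0 < q true true 0 0 := lt_of_le_of_ne (hq true true 0 0) (Ne.symm hQ)
  -- from c3 : the b-sum vanishes at z = 1
  have e3 : ∀ y, q true true y 1 = 0 ∧ q false true y 1 = 0 := by
    intro y
    have := (mul_eq_zero.mp (c3 y)).resolve_left hA
    simp only [Fintype.sum_bool] at this
    exact ⟨by linarith [hq true true y 1, hq false true y 1],
           by linarith [hq true true y 1, hq false true y 1]⟩
  -- from c1 at z = 0 : pa true 1 = 0
  have hA1 : pa true 1 = 0 := by
    have h10 := c1 0
    rcases mul_eq_zero.mp h10 with h' | h'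
    · exact h'
    · exfalso
      simp only [Fintype.sum_bool] at h'
      linarith [hq true false 0 0]
  have hA1' : pa false 1 = 1 := by
    have := hpan 1; simp only [Fintype.sum_bool] at this; linarith
  have hff : q false false 1 1 = 0 := by
    have := c4; rw [hA1'] at this; linarith
  -- normalization at (1,1)
  have htf11 : q true false 1 1 = 1 := by
    have := hqn 1 1; simp only [Fintype.sum_bool] at this
    have e1 := (e3 1).1; have e2 := (e3 1).2
    linarith
  -- NS in z : row of (a = true) at (1,0)
  have hrow : q true true 1 0 + q true false 1 0 = 1 := by
    have := ns1 true 1 1 0; simp only [Fintype.sum_bool] at this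
    have e1 := (e3 1).1
    linarith
  have htf10 : q true false 1 0 = 1 := by rw [c2] at hrow; linarith
  have hft10 : q false true 1 0 = 0 := by
    have := hqn 1 0; simp only [Fintype.sum_bool] at this
    linarith [hq false false 1 0, hq false true 1 0]
  -- NS in y : column (c = true) at (0,0)
  have hcol : q true true 0 0 + q false true 0 0 = 0 := by
    have := ns2 true 1 0 0; simp only [Fintype.sum_bool] at this
    linarith [c2, hft10]
  linarith [hq false true 0 0]

private lemma hardyCaseB (pb : Bool → Fin 2 → ℝ) (q : Bool → Bool → Fin 2 → Fin 2 → ℝ)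
    (hpb : ∀ b y, 0 ≤ pb b y) (hpbn : ∀ y, ∑ b, pb b y = 1)
    (hq : ∀ a c x z, 0 ≤ q a c x z)
    (hqn : ∀ x z, ∑ a, ∑ c, q a c x z = 1)
    (ns1 : ∀ a x z z', ∑ c, q a c x z = ∑ c, q a c x z')
    (ns2 : ∀ c x x' z, ∑ a, q a c x z = ∑ a, q a c x' z)
    (c1 : ∀ z, pb true 0 * ∑ c, q true c 1 z = 0)
    (c2 : ∀ x, pb true 1 * ∑ a, q a true x 0 = 0)
    (c3 : q true true 0 1 = 0)
    (c4 : pb false 1 * q false false 1 1 = 0) :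
    pb true 0 * q true true 0 0 = 0 := by
  by_contra h
  obtain ⟨hB, hQ⟩ := mul_ne_zero_iff.mp h
  have hB0 : 0 < pb true 0 := lt_of_le_of_ne (hpb true 0) (Ne.symm hB)
  have hQ0 : 0 < q true true 0 0 := lt_of_le_of_ne (hq true true 0 0) (Ne.symm hQ)
  -- from c1 : row a = true at x = 1 vanishes for every z
  have e1 : ∀ z, q true true 1 z = 0 ∧ q true false 1 z = 0 := by
    intro z
    have := (mul_eq_zero.mp (c1 z)).resolve_left hB
    simp only [Fintype.sum_bool] at this
    exact ⟨by linarith [hq true true 1 z, hq true false 1 z],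
           by linarith [hq true true 1 z, hq true false 1 z]⟩
  -- NS in z : q true false 0 1 > 0
  have htf01 : 0 < q true false 0 1 := by
    have := ns1 true 0 0 1; simp only [Fintype.sum_bool] at this
    rw [c3] at this
    linarith [hq true false 0 0]
  -- NS in x : q false false 1 1 > 0
  have hff11 : 0 < q false false 1 1 := by
    have := ns2 false 0 1 1; simp only [Fintype.sum_bool] at this
    have := (e1 1).2
    linarith [hq false false 0 1]
  have hpb1 : pb true 1 = 1 := by
    have h4' : pb false 1 = 0 := by
      rcases mul_eq_zero.mp c4 with h' | h'
      · exact h'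
      · exfalso; linarith
    have := hpbn 1; simp only [Fintype.sum_bool] at this; linarith
  have := c2 0
  rw [hpb1, one_mul] at this
  simp only [Fintype.sum_bool] at this
  linarith [hq false true 0 0]

private lemma hardyCaseC (pc : Bool → Fin 2 → ℝ) (q : Bool → Bool → Fin 2 → Fin 2 → ℝ)
    (hpc : ∀ c z, 0 ≤ pc c z) (hpcn : ∀ z, ∑ c, pc c z = 1)
    (hq : ∀ a b x y, 0 ≤ q a b x y)
    (hqn : ∀ x y, ∑ a, ∑ b, q a b x y = 1)
    (ns1 : ∀ a x y y', ∑ b, q a b x y = ∑ b, q a b x y')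
    (ns2 : ∀ b x x' y, ∑ a, q a b x y = ∑ a, q a b x' y)
    (c1 : q true true 1 0 = 0)
    (c2 : ∀ x, pc true 0 * ∑ a, q a true x 1 = 0)
    (c3 : ∀ y, pc true 1 * ∑ b, q true b 0 y = 0)
    (c4 : pc false 1 * q false false 1 1 = 0) :
    pc true 0 * q true true 0 0 = 0 := by
  by_contra h
  obtain ⟨hC, hQ⟩ := mul_ne_zero_iff.mp h
  have hC0 : 0 < pc true 0 := lt_of_le_of_ne (hpc true 0) (Ne.symm hC)
  have hQ0 : 0 < q true true 0 0 := lt_of_le_of_ne (hq true true 0 0) (Ne.symm hQ)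
  -- from c2 : column b = true at y = 1 vanishes for every x
  have e2 : ∀ x, q true true x 1 = 0 ∧ q false true x 1 = 0 := by
    intro x
    have := (mul_eq_zero.mp (c2 x)).resolve_left hC
    simp only [Fintype.sum_bool] at this
    exact ⟨by linarith [hq true true x 1, hq false true x 1],
           by linarith [hq true true x 1, hq false true x 1]⟩
  -- pc true 1 must vanish
  have hpc1 : pc true 1 = 0 := by
    rcases mul_eq_zero.mp (c3 0) with h' | h'
    · exact h'
    · exfalso
      simp only [Fintype.sum_bool] at h'
      linarith [hq true false 0 0]
  have hpc1' : pc false 1 = 1 := by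
    have := hpcn 1; simp only [Fintype.sum_bool] at this; linarith
  have hff : q false false 1 1 = 0 := by
    have := c4; rw [hpc1'] at this; linarith
  have htf11 : q true false 1 1 = 1 := by
    have := hqn 1 1; simp only [Fintype.sum_bool] at this
    have e1 := (e2 1).1; have e2' := (e2 1).2
    linarith
  have hrow : q true true 1 0 + q true false 1 0 = 1 := by
    have := ns1 true 1 1 0; simp only [Fintype.sum_bool] at this
    have e1 := (e2 1).1
    linarith
  have htf10 : q true false 1 0 = 1 := by rw [c1] at hrow; linarith
  have hft10 : q false true 1 0 = 0 := by
    have := hqn 1 0; simp only [Fintype.sum_bool] at this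
    linarith [hq false false 1 0, hq false true 1 0]
  have hcol : q true true 0 0 + q false true 0 0 = 0 := by
    have := ns2 true 1 0 0; simp only [Fintype.sum_bool] at this
    linarith [c1, hft10]
  linarith [hq false true 0 0]

/-- A strictly positive Hardy probability is incompatible with any convex mixture
of one-versus-two bipartitioned no-signalling models: if such a mixture satisfies
the four Hardy zero constraints, its Hardy probability vanishes. -/
theorem hardy_zero_bilocal_mixture {M : ℕ}
    (μ₁ μ₂ μ₃ : Fin M → ℝ)
    (hμ₁ : ∀ m, 0 ≤ μ₁ m) (hμ₂ : ∀ m, 0 ≤ μ₂ m) (hμ₃ : ∀ m, 0 ≤ μ₃ m)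
    (hμsum : ∑ m, (μ₁ m + μ₂ m + μ₃ m) = 1)
    -- single-party response distributions
    (pA : Fin M → Bool → Fin 2 → ℝ)
    (pB : Fin M → Bool → Fin 2 → ℝ)
    (pC : Fin M → Bool → Fin 2 → ℝ)
    (hpA : ∀ m a x, 0 ≤ pA m a x) (hpAn : ∀ m x, ∑ a, pA m a x = 1)
    (hpB : ∀ m b y, 0 ≤ pB m b y) (hpBn : ∀ m y, ∑ b, pB m b y = 1)
    (hpC : ∀ m c z, 0 ≤ pC m c z) (hpCn : ∀ m z, ∑ c, pC m c z = 1)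
    -- bipartite no-signalling boxes for the complementary pairs
    (qBC : Fin M → Bool → Bool → Fin 2 → Fin 2 → ℝ)
    (qAC : Fin M → Bool → Bool → Fin 2 → Fin 2 → ℝ)
    (qAB : Fin M → Bool → Bool → Fin 2 → Fin 2 → ℝ)
    (hqBC : ∀ m b c y z, 0 ≤ qBC m b c y z)
    (hqBCn : ∀ m y z, ∑ b, ∑ c, qBC m b c y z = 1)
    (hqBCns₁ : ∀ m b y z z', ∑ c, qBC m b c y z = ∑ c, qBC m b c y z')
    (hqBCns₂ : ∀ m c y y' z, ∑ b, qBC m b c y z = ∑ b, qBC m b c y' z)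
    (hqAC : ∀ m a c x z, 0 ≤ qAC m a c x z)
    (hqACn : ∀ m x z, ∑ a, ∑ c, qAC m a c x z = 1)
    (hqACns₁ : ∀ m a x z z', ∑ c, qAC m a c x z = ∑ c, qAC m a c x z')
    (hqACns₂ : ∀ m c x x' z, ∑ a, qAC m a c x z = ∑ a, qAC m a c x' z)
    (hqAB : ∀ m a b x y, 0 ≤ qAB m a b x y)
    (hqABn : ∀ m x y, ∑ a, ∑ b, qAB m a b x y = 1)
    (hqABns₁ : ∀ m a x y y', ∑ b, qAB m a b x y = ∑ b, qAB m a b x y')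
    (hqABns₂ : ∀ m b x x' y, ∑ a, qAB m a b x y = ∑ a, qAB m a b x' y)
    -- the mixture
    (p : Bool → Bool → Bool → Fin 2 → Fin 2 → Fin 2 → ℝ)
    (hp : ∀ a b c x y z, p a b c x y z = ∑ m,
      (μ₁ m * (pA m a x * qBC m b c y z) + μ₂ m * (pB m b y * qAC m a c x z)
        + μ₃ m * (pC m c z * qAB m a b x y)))
    -- Hardy zero constraints
    (h1 : ∀ z, ∑ c, p true true c 1 0 z = 0)
    (h2 : ∀ x, ∑ a, p a true true x 1 0 = 0)
    (h3 : ∀ y, ∑ b, p true b true 0 y 1 = 0)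
    (h4 : p false false false 1 1 1 = 0) :
    p true true true 0 0 0 = 0 := by
  have key : ∀ m : Fin M,
      μ₁ m * (pA m true 0 * qBC m true true 0 0) = 0 ∧
      μ₂ m * (pB m true 0 * qAC m true true 0 0) = 0 ∧
      μ₃ m * (pC m true 0 * qAB m true true 0 0) = 0 := by
    intro m
    -- component constraints extracted from h1
    have E1 : ∀ z : Fin 2,
        μ₁ m * (pA m true 1 * ∑ c, qBC m true c 0 z) = 0 ∧
        μ₂ m * (pB m true 0 * ∑ c, qAC m true c 1 z) = 0 ∧
        μ₃ m * qAB m true true 1 0 = 0 := by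
      intro z
      have h := h1 z
      simp only [hp] at h
      rw [Finset.sum_comm] at h
      have hnn : ∀ i ∈ (univ : Finset (Fin M)), (0:ℝ) ≤
          ∑ c, (μ₁ i * (pA i true 1 * qBC i true c 0 z)
            + μ₂ i * (pB i true 0 * qAC i true c 1 z)
            + μ₃ i * (pC i c z * qAB i true true 1 0)) := by
        intro i _
        refine Finset.sum_nonneg fun c _ => ?_
        exact add_nonneg (add_nonneg
          (mul_nonneg (hμ₁ i) (mul_nonneg (hpA i true 1) (hqBC i true c 0 z)))
          (mul_nonneg (hμ₂ i) (mul_nonneg (hpB i true 0) (hqAC i true c 1 z))))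
          (mul_nonneg (hμ₃ i) (mul_nonneg (hpC i c z) (hqAB i true true 1 0)))
      have hm := (Finset.sum_eq_zero_iff_of_nonneg hnn).mp h m (Finset.mem_univ m)
      have hc : pC m true z + pC m false z = 1 := by
        simpa [Fintype.sum_bool] using hpCn m z
      simp only [Fintype.sum_bool] at hm ⊢
      refine sum3_zero ?_ ?_ ?_ ?_
      · exact mul_nonneg (hμ₁ m) (mul_nonneg (hpA m true 1)
          (add_nonneg (hqBC m true true 0 z) (hqBC m true false 0 z)))
      · exact mul_nonneg (hμ₂ m) (mul_nonneg (hpB m true 0)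
          (add_nonneg (hqAC m true true 1 z) (hqAC m true false 1 z)))
      · exact mul_nonneg (hμ₃ m) (hqAB m true true 1 0)
      · linear_combination hm - (μ₃ m * qAB m true true 1 0) * hc
    -- component constraints extracted from h2
    have E2 : ∀ x : Fin 2,
        μ₁ m * qBC m true true 1 0 = 0 ∧
        μ₂ m * (pB m true 1 * ∑ a, qAC m a true x 0) = 0 ∧
        μ₃ m * (pC m true 0 * ∑ a, qAB m a true x 1) = 0 := by
      intro x
      have h := h2 x
      simp only [hp] at h
      rw [Finset.sum_comm] at h
      have hnn : ∀ i ∈ (univ : Finset (Fin M)), (0:ℝ) ≤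
          ∑ a, (μ₁ i * (pA i a x * qBC i true true 1 0)
            + μ₂ i * (pB i true 1 * qAC i a true x 0)
            + μ₃ i * (pC i true 0 * qAB i a true x 1)) := by
        intro i _
        refine Finset.sum_nonneg fun a _ => ?_
        exact add_nonneg (add_nonneg
          (mul_nonneg (hμ₁ i) (mul_nonneg (hpA i a x) (hqBC i true true 1 0)))
          (mul_nonneg (hμ₂ i) (mul_nonneg (hpB i true 1) (hqAC i a true x 0))))
          (mul_nonneg (hμ₃ i) (mul_nonneg (hpC i true 0) (hqAB i a true x 1)))
      have hm := (Finset.sum_eq_zero_iff_of_nonneg hnn).mp h m (Finset.mem_univ m)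
      have ha : pA m true x + pA m false x = 1 := by
        simpa [Fintype.sum_bool] using hpAn m x
      simp only [Fintype.sum_bool] at hm ⊢
      refine sum3_zero ?_ ?_ ?_ ?_
      · exact mul_nonneg (hμ₁ m) (hqBC m true true 1 0)
      · exact mul_nonneg (hμ₂ m) (mul_nonneg (hpB m true 1)
          (add_nonneg (hqAC m true true x 0) (hqAC m false true x 0)))
      · exact mul_nonneg (hμ₃ m) (mul_nonneg (hpC m true 0)
          (add_nonneg (hqAB m true true x 1) (hqAB m false true x 1)))
      · linear_combination hm - (μ₁ m * qBC m true true 1 0) * ha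
    -- component constraints extracted from h3
    have E3 : ∀ y : Fin 2,
        μ₁ m * (pA m true 0 * ∑ b, qBC m b true y 1) = 0 ∧
        μ₂ m * qAC m true true 0 1 = 0 ∧
        μ₃ m * (pC m true 1 * ∑ b, qAB m true b 0 y) = 0 := by
      intro y
      have h := h3 y
      simp only [hp] at h
      rw [Finset.sum_comm] at h
      have hnn : ∀ i ∈ (univ : Finset (Fin M)), (0:ℝ) ≤
          ∑ b, (μ₁ i * (pA i true 0 * qBC i b true y 1)
            + μ₂ i * (pB i b y * qAC i true true 0 1)
            + μ₃ i * (pC i true 1 * qAB i true b 0 y)) := by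
        intro i _
        refine Finset.sum_nonneg fun b _ => ?_
        exact add_nonneg (add_nonneg
          (mul_nonneg (hμ₁ i) (mul_nonneg (hpA i true 0) (hqBC i b true y 1)))
          (mul_nonneg (hμ₂ i) (mul_nonneg (hpB i b y) (hqAC i true true 0 1))))
          (mul_nonneg (hμ₃ i) (mul_nonneg (hpC i true 1) (hqAB i true b 0 y)))
      have hm := (Finset.sum_eq_zero_iff_of_nonneg hnn).mp h m (Finset.mem_univ m)
      have hb : pB m true y + pB m false y = 1 := by
        simpa [Fintype.sum_bool] using hpBn m y
      simp only [Fintype.sum_bool] at hm ⊢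
      refine sum3_zero ?_ ?_ ?_ ?_
      · exact mul_nonneg (hμ₁ m) (mul_nonneg (hpA m true 0)
          (add_nonneg (hqBC m true true y 1) (hqBC m false true y 1)))
      · exact mul_nonneg (hμ₂ m) (hqAC m true true 0 1)
      · exact mul_nonneg (hμ₃ m) (mul_nonneg (hpC m true 1)
          (add_nonneg (hqAB m true true 0 y) (hqAB m true false 0 y)))
      · linear_combination hm - (μ₂ m * qAC m true true 0 1) * hb
    -- component constraints extracted from h4
    have E4 :
        μ₁ m * (pA m false 1 * qBC m false false 1 1) = 0 ∧
        μ₂ m * (pB m false 1 * qAC m false false 1 1) = 0 ∧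
        μ₃ m * (pC m false 1 * qAB m false false 1 1) = 0 := by
      have h := h4
      rw [hp] at h
      have hnn : ∀ i ∈ (univ : Finset (Fin M)), (0:ℝ) ≤
          μ₁ i * (pA i false 1 * qBC i false false 1 1)
            + μ₂ i * (pB i false 1 * qAC i false false 1 1)
            + μ₃ i * (pC i false 1 * qAB i false false 1 1) := by
        intro i _
        exact add_nonneg (add_nonneg
          (mul_nonneg (hμ₁ i) (mul_nonneg (hpA i false 1) (hqBC i false false 1 1)))
          (mul_nonneg (hμ₂ i) (mul_nonneg (hpB i false 1) (hqAC i false false 1 1))))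
          (mul_nonneg (hμ₃ i) (mul_nonneg (hpC i false 1) (hqAB i false false 1 1)))
      have hm := (Finset.sum_eq_zero_iff_of_nonneg hnn).mp h m (Finset.mem_univ m)
      refine sum3_zero ?_ ?_ ?_ hm
      · exact mul_nonneg (hμ₁ m) (mul_nonneg (hpA m false 1) (hqBC m false false 1 1))
      · exact mul_nonneg (hμ₂ m) (mul_nonneg (hpB m false 1) (hqAC m false false 1 1))
      · exact mul_nonneg (hμ₃ m) (mul_nonneg (hpC m false 1) (hqAB m false false 1 1))
    refine ⟨?_, ?_, ?_⟩
    · rcases (hμ₁ m).eq_or_lt with hz | hpos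
      · rw [← hz, zero_mul]
      · have hne : μ₁ m ≠ 0 := ne_of_gt hpos
        have c1' : ∀ z, pA m true 1 * ∑ c, qBC m true c 0 z = 0 :=
          fun z => (mul_eq_zero.mp (E1 z).1).resolve_left hne
        have c2' : qBC m true true 1 0 = 0 :=
          (mul_eq_zero.mp (E2 0).1).resolve_left hne
        have c3' : ∀ y, pA m true 0 * ∑ b, qBC m b true y 1 = 0 :=
          fun y => (mul_eq_zero.mp (E3 y).1).resolve_left hne
        have c4' : pA m false 1 * qBC m false false 1 1 = 0 :=
          (mul_eq_zero.mp E4.1).resolve_left hne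
        rw [hardyCaseA (pA m) (qBC m) (hpA m) (hpAn m) (hqBC m) (hqBCn m)
          (hqBCns₁ m) (hqBCns₂ m) c1' c2' c3' c4', mul_zero]
    · rcases (hμ₂ m).eq_or_lt with hz | hpos
      · rw [← hz, zero_mul]
      · have hne : μ₂ m ≠ 0 := ne_of_gt hpos
        have c1' : ∀ z, pB m true 0 * ∑ c, qAC m true c 1 z = 0 :=
          fun z => (mul_eq_zero.mp (E1 z).2.1).resolve_left hne
        have c2' : ∀ x, pB m true 1 * ∑ a, qAC m a true x 0 = 0 :=
          fun x => (mul_eq_zero.mp (E2 x).2.1).resolve_left hne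
        have c3' : qAC m true true 0 1 = 0 :=
          (mul_eq_zero.mp (E3 0).2.1).resolve_left hne
        have c4' : pB m false 1 * qAC m false false 1 1 = 0 :=
          (mul_eq_zero.mp E4.2.1).resolve_left hne
        rw [hardyCaseB (pB m) (qAC m) (hpB m) (hpBn m) (hqAC m) (hqACn m)
          (hqACns₁ m) (hqACns₂ m) c1' c2' c3' c4', mul_zero]
    · rcases (hμ₃ m).eq_or_lt with hz | hpos
      · rw [← hz, zero_mul]
      · have hne : μ₃ m ≠ 0 := ne_of_gt hpos
        have c1' : qAB m true true 1 0 = 0 :=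
          (mul_eq_zero.mp (E1 0).2.2).resolve_left hne
        have c2' : ∀ x, pC m true 0 * ∑ a, qAB m a true x 1 = 0 :=
          fun x => (mul_eq_zero.mp (E2 x).2.2).resolve_left hne
        have c3' : ∀ y, pC m true 1 * ∑ b, qAB m true b 0 y = 0 :=
          fun y => (mul_eq_zero.mp (E3 y).2.2).resolve_left hne
        have c4' : pC m false 1 * qAB m false false 1 1 = 0 :=
          (mul_eq_zero.mp E4.2.2).resolve_left hne
        rw [hardyCaseC (pC m) (qAB m) (hpC m) (hpCn m) (hqAB m) (hqABn m)
          (hqABns₁ m) (hqABns₂ m) c1' c2' c3' c4', mul_zero]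
  rw [hp]
  refine Finset.sum_eq_zero fun m _ => ?_
  obtain ⟨k1, k2, k3⟩ := key m
  rw [k1, k2, k3]
  ring
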